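/- Let q ∈ (1, 2], λ > 0, γ > 0, σ > 0 and δ ≠ 0, and let G(y) = λ|y|^q/q, so that (G')⁻¹(y) = sgn(y)·|y/λ|^{1/(q−1)}. Suppose g̃ : ℝ → ℝ is twice differentiable and solves the rescaled ordinary differential equation g̃''(x) + g̃'(x)·sgn(g̃(x))·|g̃(x)/q|^{1/(q−1)} = 2x for all x ∈ ℝ. Then the function g : ℝ → ℝ defined by g(x) = (λ/q)^{3/(q+2)}·(γσ²δ⁴/8)^{(q−1)/(q+2)}·g̃(2^{(q−1)/(q+2)}·(qγσ²/λ)^{1/(q+2)}·δ^{−2q/(q+2)}·x) is twice differentiable and solves (δ²/2)·g''(x) + g'(x)·(G')⁻¹(g(x)) = γσ²·x for all x ∈ ℝ. -/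

import Mathlib

lemma my_eq_of_log {x y : ℝ} (hx : 0 < x) (hy : 0 < y)
    (h : Real.log x = Real.log y) : x = y := by
  rw [← Real.exp_log hx, ← Real.exp_log hy, h]


/-- Rescaling for power costs `G(y) = λ|y|^q/q` with `q ∈ (1,2]`: if `g̃` solves the
rescaled ODE `g̃'' + g̃'·sgn(g̃)·|g̃/q|^{1/(q−1)} = 2x`, then the rescaled function `g`
solves the ergodic ODE `(δ²/2)·g'' + g'·(G')⁻¹(g) = γσ²·x`,
where `(G')⁻¹(y) = sgn(y)·|y/λ|^{1/(q−1)}`. -/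
theorem stmt18 (q lam γ σ δ : ℝ) (hq1 : 1 < q) (hq2 : q ≤ 2)
    (hlam : 0 < lam) (hγ : 0 < γ) (hσ : 0 < σ) (hδ : δ ≠ 0)
    (gq : ℝ → ℝ) (hgq : Differentiable ℝ gq) (hgq' : Differentiable ℝ (deriv gq))
    (hodeq : ∀ x : ℝ, deriv (deriv gq) x
      + deriv gq x * Real.sign (gq x) * |gq x / q| ^ (1 / (q - 1)) = 2 * x)
    (g : ℝ → ℝ)
    (hg : ∀ x : ℝ, g x =
      (lam / q) ^ (3 / (q + 2)) * (γ * σ ^ 2 * δ ^ 4 / 8) ^ ((q - 1) / (q + 2)) *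
        gq ((2 : ℝ) ^ ((q - 1) / (q + 2)) * (q * γ * σ ^ 2 / lam) ^ (1 / (q + 2)) *
          (δ ^ 2) ^ (-(q / (q + 2))) * x)) :
    Differentiable ℝ g ∧ Differentiable ℝ (deriv g) ∧
    ∀ x : ℝ, δ ^ 2 / 2 * deriv (deriv g) x
      + deriv g x * (Real.sign (g x) * |g x / lam| ^ (1 / (q - 1))) = γ * σ ^ 2 * x := by
  have hqpos : 0 < q := by linarith
  have hq1' : (0:ℝ) < q - 1 := by linarith
  have hK : (0:ℝ) < q + 2 := by linarith
  have hδ2 : (0:ℝ) < δ ^ 2 := by positivity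
  set A := (lam / q) ^ (3 / (q + 2)) * (γ * σ ^ 2 * δ ^ 4 / 8) ^ ((q - 1) / (q + 2)) with hA
  set C := (2:ℝ) ^ ((q - 1) / (q + 2)) * (q * γ * σ ^ 2 / lam) ^ (1 / (q + 2)) *
      (δ ^ 2) ^ (-(q / (q + 2))) with hC
  have hApos : 0 < A := by rw [hA]; positivity
  have hCpos : 0 < C := by rw [hC]; positivity
  -- logs
  have hlogA : Real.log A = 3 / (q + 2) * (Real.log lam - Real.log q)
      + (q - 1) / (q + 2) * (Real.log γ + 2 * Real.log σ + 4 * Real.log δ - 3 * Real.log 2) := by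
    have h8 : Real.log 8 = 3 * Real.log 2 := by
      rw [show (8:ℝ) = 2 ^ (3:ℕ) by norm_num, Real.log_pow]; push_cast; ring
    rw [hA, Real.log_mul (by positivity) (by positivity),
      Real.log_rpow (by positivity), Real.log_rpow (by positivity),
      Real.log_div hlam.ne' hqpos.ne',
      Real.log_div (by positivity) (by norm_num),
      Real.log_mul (by positivity) (by positivity),
      Real.log_mul hγ.ne' (by positivity),
      Real.log_pow, Real.log_pow, h8]
    push_cast; ring
  have hlogC : Real.log C = (q - 1) / (q + 2) * Real.log 2
      + 1 / (q + 2) * (Real.log q + Real.log γ + 2 * Real.log σ - Real.log lam)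
      - q / (q + 2) * (2 * Real.log δ) := by
    rw [hC, Real.log_mul (by positivity) (by positivity),
      Real.log_mul (by positivity) (by positivity),
      Real.log_rpow (by norm_num), Real.log_rpow (by positivity),
      Real.log_rpow hδ2,
      Real.log_div (by positivity) hlam.ne',
      Real.log_mul (by positivity) (by positivity),
      Real.log_mul hqpos.ne' hγ.ne',
      Real.log_pow, Real.log_pow]
    push_cast; ring
  -- key algebraic identities
  have hE1 : δ ^ 2 * A * C ^ 3 = γ * σ ^ 2 := by
    apply my_eq_of_log (by positivity) (by positivity)
    rw [Real.log_mul (by positivity) (pow_pos hCpos 3).ne',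
      Real.log_mul hδ2.ne' hApos.ne', Real.log_pow, Real.log_pow, hlogA, hlogC,
      Real.log_mul hγ.ne' (by positivity), Real.log_pow]
    push_cast
    field_simp
    ring
  have hE2 : (A * q / lam) ^ (1 / (q - 1)) = δ ^ 2 * C / 2 := by
    apply my_eq_of_log (Real.rpow_pos_of_pos (by positivity) _) (by positivity)
    rw [Real.log_rpow (by positivity),
      Real.log_div (by positivity) hlam.ne',
      Real.log_mul hApos.ne' hqpos.ne', hlogA,
      Real.log_div (by positivity) (by norm_num : (2:ℝ) ≠ 0),
      Real.log_mul hδ2.ne' hCpos.ne', Real.log_pow, hlogC]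
    push_cast
    field_simp
    ring
  have hkey : (A / lam) ^ (1 / (q - 1)) * q ^ (1 / (q - 1)) = δ ^ 2 * C / 2 := by
    rw [← Real.mul_rpow (by positivity) hqpos.le, div_mul_eq_mul_div, hE2]
  -- sign and abs lemmas
  have hsign : ∀ y : ℝ, Real.sign (A * y) = Real.sign y := by
    intro y
    rcases lt_trichotomy y 0 with h | h | h
    · rw [Real.sign_of_neg h, Real.sign_of_neg (mul_neg_of_pos_of_neg hApos h)]
    · simp [h]
    · rw [Real.sign_of_pos h, Real.sign_of_pos (mul_pos hApos h)]
  have hqr : (0:ℝ) < q ^ (1 / (q - 1)) := Real.rpow_pos_of_pos hqpos _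
  have habs : ∀ y : ℝ, |A * y / lam| ^ (1 / (q - 1))
      = δ ^ 2 * C / 2 * |y / q| ^ (1 / (q - 1)) := by
    intro y
    have h1 : |A * y / lam| = A / lam * |y| := by
      rw [abs_div, abs_mul, abs_of_pos hApos, abs_of_pos hlam]; ring
    have h2 : |y / q| = |y| / q := by rw [abs_div, abs_of_pos hqpos]
    rw [h1, h2, Real.mul_rpow (by positivity) (abs_nonneg y),
      Real.div_rpow (abs_nonneg y) hqpos.le, ← hkey]
    field_simp
  -- derivatives
  have hgfun : g = fun x => A * gq (C * x) := funext fun x => hg x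
  have hder1 : ∀ x : ℝ, HasDerivAt g (A * C * deriv gq (C * x)) x := by
    intro x
    rw [hgfun]
    have hin : HasDerivAt (fun y : ℝ => C * y) C x := by
      simpa using (hasDerivAt_id x).const_mul C
    have h1 : HasDerivAt (fun y => gq (C * y)) (deriv gq (C * x) * C) x :=
      (hgq (C * x)).hasDerivAt.comp x hin
    have := h1.const_mul A
    simpa [mul_comm, mul_assoc, mul_left_comm] using this
  have hd1 : deriv g = fun x => A * C * deriv gq (C * x) := funext fun x => (hder1 x).deriv
  have hder2 : ∀ x : ℝ, HasDerivAt (deriv g) (A * C ^ 2 * deriv (deriv gq) (C * x)) x := by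
    intro x
    rw [hd1]
    have hin : HasDerivAt (fun y : ℝ => C * y) C x := by
      simpa using (hasDerivAt_id x).const_mul C
    have h1 : HasDerivAt (fun y => deriv gq (C * y)) (deriv (deriv gq) (C * x) * C) x :=
      (hgq' (C * x)).hasDerivAt.comp x hin
    have h3 := h1.const_mul (A * C)
    rw [show A * C ^ 2 * deriv (deriv gq) (C * x) = A * C * (deriv (deriv gq) (C * x) * C) by ring]
    exact h3
  have hdd : ∀ x : ℝ, deriv (deriv g) x = A * C ^ 2 * deriv (deriv gq) (C * x) :=
    fun x => (hder2 x).deriv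
  refine ⟨fun x => (hder1 x).differentiableAt, fun x => (hder2 x).differentiableAt, ?_⟩
  intro x
  rw [hdd x, hd1, hg x, hsign, habs]
  have hode := hodeq (C * x)
  linear_combination (δ ^ 2 * A * C ^ 2 / 2) * hode + x * hE1
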